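/- arXiv:1602.06042 — 2 statements merged into one kernel-verified Lean document; each statement's English description precedes it below -/
import Mathlib

section
/- Let 𝒮_k be a family of subsets of {1, …, p}, let w* ∈ ℝ^p with S* = supp(w*), let 0 < α ≤ L, and let f : ℝ^p → ℝ be twice continuously differentiable such that for every w ∈ ℝ^p supported on S ∪ S* with S ∈ 𝒮_k and every v ∈ ℝ^p supported on S ∪ S' ∪ S* with S, S' ∈ 𝒮_k, α‖v‖² ≤ vᵀ∇²f(w)v ≤ L‖v‖². Let θ ≥ 0 and ε ≥ 0 be such that ρ := (1 + √θ)(1 − α/L) < 1. Suppose the iterates satisfy: w_0 is supported on some S_0 ∈ 𝒮_k, and for each t ≥ 0, g_t = w_t − (1/L)∇f(w_t), S_{t+1} ∈ 𝒮_k, w_{t+1} = (g_t)_{S_{t+1}}, and ‖(g_t)_{S*\S_{t+1}}‖² ≤ θ ‖(g_t)_{S_{t+1}\S*}‖² + ε. Then for every T ≥ 0, ‖w_T − w*‖ ≤ ρ^T ‖w_0 − w*‖ + (1/(1 − ρ)) · [ ((1 + √θ)/L) · γ + √ε ], where γ = sup_{S ∈ 𝒮_k} ‖(∇f(w*))_{S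 ∪ S*}‖. -/
open Finset

noncomputable section

/-- The restriction of a vector to a coordinate set: agrees with `z` on `S`, zero off `S`. -/
def restrict {p : ℕ} (z : EuclideanSpace ℝ (Fin p)) (S : Finset (Fin p)) :
    EuclideanSpace ℝ (Fin p) :=
  WithLp.toLp 2 (fun i => if i ∈ S then z i else 0)

open Classical in
/-- The support of a vector, as a finite set. -/
noncomputable def suppF {p : ℕ} (z : EuclideanSpace ℝ (Fin p)) : Finset (Fin p) :=
  Finset.univ.filter (fun i => z i ≠ 0)

/-- `w` is `k`-group-sparse w.r.t. the groups `G`. -/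
def GroupSparse {p M : ℕ} (G : Fin M → Finset (Fin p)) (k : ℕ)
    (w : EuclideanSpace ℝ (Fin p)) : Prop :=
  ∃ A : Finset (Fin M), A.card ≤ k ∧ suppF w ⊆ A.biUnion G

/-- `B_j`: the union of the first `j` selected groups. -/
def partialUnion {p M m : ℕ} (G : Fin M → Finset (Fin p)) (idx : Fin m → Fin M) (j : ℕ) :
    Finset (Fin p) :=
  (Finset.univ.filter (fun t : Fin m => (t : ℕ) < j)).biUnion (fun t => G (idx t))

/-- `idx` is a greedy selection for `z` (Algorithm 2 of the paper): at each step `j`,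
the selected group maximizes the norm of `z` restricted to the yet-uncovered part. -/
def IsGreedySelection {p M m : ℕ} (G : Fin M → Finset (Fin p))
    (z : EuclideanSpace ℝ (Fin p)) (idx : Fin m → Fin M) : Prop :=
  ∀ j : Fin m, ∀ ℓ : Fin M,
    ‖restrict z (G ℓ \ partialUnion G idx (j : ℕ))‖ ≤
      ‖restrict z (G (idx j) \ partialUnion G idx (j : ℕ))‖

/-- `w` is an exact projection of `z` onto `k`-group-sparse vectors. -/
def IsExactProj {p M : ℕ} (G : Fin M → Finset (Fin p)) (k : ℕ)
    (z w : EuclideanSpace ℝ (Fin p)) : Prop :=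
  GroupSparse G k w ∧ ∀ w', GroupSparse G k w' → ‖w - z‖ ≤ ‖w' - z‖

/-- `f` satisfies restricted strong convexity / smoothness of order `k'`
with constants `α ≤ L`. -/
def RSCRSS {p M : ℕ} (G : Fin M → Finset (Fin p)) (k' : ℕ) (α L : ℝ)
    (f : EuclideanSpace ℝ (Fin p) → ℝ) : Prop :=
  ContDiff ℝ 2 f ∧
  ∀ w : EuclideanSpace ℝ (Fin p), GroupSparse G k' w →
    ∀ v : EuclideanSpace ℝ (Fin p),
      α * ‖v‖ ^ 2 ≤ iteratedFDeriv ℝ 2 f w ![v, v] ∧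
      iteratedFDeriv ℝ 2 f w ![v, v] ≤ L * ‖v‖ ^ 2

open scoped RealInnerProductSpace

section Toolbox
variable {p : ℕ}


lemma restrict_apply (z : EuclideanSpace ℝ (Fin p)) (S : Finset (Fin p)) (i : Fin p) :
    restrict z S i = if i ∈ S then z i else 0 := rfl

lemma suppF_subset_iff {z : EuclideanSpace ℝ (Fin p)} {S : Finset (Fin p)} :
    suppF z ⊆ S ↔ ∀ i, i ∉ S → z i = 0 := by
  classical
  constructor
  · intro h i hi
    by_contra hz
    exact hi (h (by simp [suppF, hz]))
  · intro h i hi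
    simp only [suppF, mem_filter] at hi
    by_contra hS
    exact hi.2 (h i hS)

lemma inner_restrict (z y : EuclideanSpace ℝ (Fin p)) (S : Finset (Fin p)) :
    ⟪restrict z S, y⟫ = ∑ i ∈ S, z i * y i := by
  rw [PiLp.inner_apply]
  rw [← Finset.sum_subset (Finset.subset_univ S)]
  · exact Finset.sum_congr rfl (fun i hi => by simp [restrict_apply, hi, RCLike.inner_apply, mul_comm])
  · intro i _ hi
    simp [restrict_apply, hi, RCLike.inner_apply]

lemma restrict_eq_self {z : EuclideanSpace ℝ (Fin p)} {S : Finset (Fin p)}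
    (h : suppF z ⊆ S) : restrict z S = z := by
  ext i
  by_cases hi : i ∈ S
  · simp [restrict_apply, hi]
  · simp [restrict_apply, hi, suppF_subset_iff.1 h i hi]

lemma restrict_add (x y : EuclideanSpace ℝ (Fin p)) (S : Finset (Fin p)) :
    restrict (x + y) S = restrict x S + restrict y S := by
  ext i; by_cases hi : i ∈ S <;> simp [restrict_apply, hi]

lemma restrict_smul (c : ℝ) (x : EuclideanSpace ℝ (Fin p)) (S : Finset (Fin p)) :
    restrict (c • x) S = c • restrict x S := by
  ext i; by_cases hi : i ∈ S <;> simp [restrict_apply, hi]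

lemma restrict_sub (x y : EuclideanSpace ℝ (Fin p)) (S : Finset (Fin p)) :
    restrict (x - y) S = restrict x S - restrict y S := by
  ext i; by_cases hi : i ∈ S <;> simp [restrict_apply, hi]

lemma restrict_union_disjoint {S T : Finset (Fin p)} (h : Disjoint S T)
    (z : EuclideanSpace ℝ (Fin p)) :
    restrict z (S ∪ T) = restrict z S + restrict z T := by
  ext i
  by_cases hS : i ∈ S
  · have hT : i ∉ T := Finset.disjoint_left.1 h hS
    simp [restrict_apply, hS, hT]
  · by_cases hT : i ∈ T <;> simp [restrict_apply, hS, hT]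

lemma norm_restrict_sq (z : EuclideanSpace ℝ (Fin p)) (S : Finset (Fin p)) :
    ‖restrict z S‖ ^ 2 = ∑ i ∈ S, z i ^ 2 := by
  rw [← real_inner_self_eq_norm_sq, inner_restrict]
  exact Finset.sum_congr rfl (fun i hi => by simp [restrict_apply, hi]; ring)

lemma norm_restrict_mono {S T : Finset (Fin p)} (h : S ⊆ T) (z : EuclideanSpace ℝ (Fin p)) :
    ‖restrict z S‖ ≤ ‖restrict z T‖ := by
  have h2 : ‖restrict z S‖ ^ 2 ≤ ‖restrict z T‖ ^ 2 := by
    rw [norm_restrict_sq, norm_restrict_sq]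
    exact Finset.sum_le_sum_of_subset_of_nonneg h (fun i _ _ => sq_nonneg _)
  nlinarith [norm_nonneg (restrict z S), norm_nonneg (restrict z T)]

lemma restrict_univ (z : EuclideanSpace ℝ (Fin p)) : restrict z Finset.univ = z := by
  ext i; simp [restrict_apply]

lemma norm_restrict_le (z : EuclideanSpace ℝ (Fin p)) (S : Finset (Fin p)) :
    ‖restrict z S‖ ≤ ‖z‖ := by
  conv_rhs => rw [← restrict_univ z]
  exact norm_restrict_mono (Finset.subset_univ S) z

lemma suppF_restrict (z : EuclideanSpace ℝ (Fin p)) (S : Finset (Fin p)) :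
    suppF (restrict z S) ⊆ S :=
  suppF_subset_iff.2 (fun i hi => by simp [restrict_apply, hi])

lemma suppF_sub_subset (x y : EuclideanSpace ℝ (Fin p)) :
    suppF (x - y) ⊆ suppF x ∪ suppF y := by
  apply suppF_subset_iff.2
  intro i hi
  simp only [Finset.mem_union, not_or] at hi
  have hx : x i = 0 := suppF_subset_iff.1 (le_refl _) i hi.1
  have hy : y i = 0 := suppF_subset_iff.1 (le_refl _) i hi.2
  show x i - y i = 0
  rw [hx, hy, sub_zero]

lemma suppF_add_subset (x y : EuclideanSpace ℝ (Fin p)) :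
    suppF (x + y) ⊆ suppF x ∪ suppF y := by
  apply suppF_subset_iff.2
  intro i hi
  simp only [Finset.mem_union, not_or] at hi
  have hx : x i = 0 := suppF_subset_iff.1 (le_refl _) i hi.1
  have hy : y i = 0 := suppF_subset_iff.1 (le_refl _) i hi.2
  show x i + y i = 0
  rw [hx, hy, add_zero]

lemma suppF_smul_subset (c : ℝ) (x : EuclideanSpace ℝ (Fin p)) :
    suppF (c • x) ⊆ suppF x := by
  apply suppF_subset_iff.2
  intro i hi
  have hx : x i = 0 := suppF_subset_iff.1 (le_refl _) i hi
  show c * x i = 0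
  rw [hx, mul_zero]

lemma norm_sq_restrict_union {S T : Finset (Fin p)} (h : Disjoint S T)
    (z : EuclideanSpace ℝ (Fin p)) :
    ‖restrict z (S ∪ T)‖ ^ 2 = ‖restrict z S‖ ^ 2 + ‖restrict z T‖ ^ 2 := by
  rw [norm_restrict_sq, norm_restrict_sq, norm_restrict_sq, Finset.sum_union h]

lemma inner_restrict_self_eq (z : EuclideanSpace ℝ (Fin p)) (S : Finset (Fin p)) :
    ⟪restrict z S, z⟫ = ‖restrict z S‖ ^ 2 := by
  rw [inner_restrict, norm_restrict_sq]
  exact Finset.sum_congr rfl (fun i _ => by ring)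

lemma inner_eq_zero_of_disjoint_supp {x y : EuclideanSpace ℝ (Fin p)}
    (h : Disjoint (suppF x) (suppF y)) : ⟪x, y⟫ = 0 := by
  classical
  rw [PiLp.inner_apply]
  apply Finset.sum_eq_zero
  intro i _
  by_cases hx : x i = 0
  · simp [RCLike.inner_apply, hx]
  · have hix : i ∈ suppF x := by simp [suppF, hx]
    have hiy : i ∉ suppF y := Finset.disjoint_left.1 h hix
    have hy : y i = 0 := suppF_subset_iff.1 (le_refl _) i hiy
    simp [RCLike.inner_apply, hy]

lemma norm_sub_sq_disj (x y : EuclideanSpace ℝ (Fin p))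
    (h : Disjoint (suppF x) (suppF y)) : ‖x - y‖ ^ 2 = ‖x‖ ^ 2 + ‖y‖ ^ 2 := by
  rw [norm_sub_sq_real, inner_eq_zero_of_disjoint_supp h]; ring

lemma le_of_sq_le_sq' {a b : ℝ} (ha : 0 ≤ a) (hb : 0 ≤ b) (h : a ^ 2 ≤ b ^ 2) : a ≤ b := by
  have := Real.sqrt_le_sqrt h
  rwa [Real.sqrt_sq ha, Real.sqrt_sq hb] at this

lemma sqrt_theta_bound {θ ε m n : ℝ} (hθ : 0 ≤ θ) (hε : 0 ≤ ε) (hm : 0 ≤ m) (hn : 0 ≤ n)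
    (h : m ^ 2 ≤ θ * n ^ 2 + ε) : m ≤ Real.sqrt θ * n + Real.sqrt ε := by
  have hk : 0 ≤ Real.sqrt θ * n + Real.sqrt ε := by positivity
  have h2 : m ^ 2 ≤ (Real.sqrt θ * n + Real.sqrt ε) ^ 2 := by
    nlinarith [Real.sq_sqrt hθ, Real.sq_sqrt hε,
      mul_nonneg (mul_nonneg (Real.sqrt_nonneg θ) hn) (Real.sqrt_nonneg ε)]
  exact le_of_sq_le_sq' hm hk h2


section Core

variable (f : EuclideanSpace ℝ (Fin p) → ℝ)

set_option maxHeartbeats 1000000 in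
/-- pointwise polarization bound -/
lemma polar_bound (α L : ℝ) (hα : 0 < α) (hαL : α ≤ L)
    (B2 : EuclideanSpace ℝ (Fin p) →L[ℝ] EuclideanSpace ℝ (Fin p) →L[ℝ] ℝ)
    (hsymm : ∀ v w, B2 v w = B2 w v)
    (D : Finset (Fin p))
    (hQ : ∀ v : EuclideanSpace ℝ (Fin p), suppF v ⊆ D →
      α * ‖v‖ ^ 2 ≤ B2 v v ∧ B2 v v ≤ L * ‖v‖ ^ 2)
    (u x : EuclideanSpace ℝ (Fin p)) (hu : suppF u ⊆ D) (hx : suppF x ⊆ D) :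
    ⟪u, x⟫ - (1 / L) * B2 x u ≤ (1 - α / L) * (‖u‖ * ‖x‖) := by
  have hL : 0 < L := lt_of_lt_of_le hα hαL
  have hc : 0 ≤ 1 - α / L := by
    have : α / L ≤ 1 := (div_le_one hL).2 hαL
    linarith
  by_cases hu0 : u = 0
  · simp [hu0]
  by_cases hx0 : x = 0
  · simp [hx0]
  have hun : 0 < ‖u‖ := norm_pos_iff.2 hu0
  have hxn : 0 < ‖x‖ := norm_pos_iff.2 hx0
  set t : ℝ := Real.sqrt (‖x‖ / ‖u‖) with ht
  have htpos : 0 < t := Real.sqrt_pos.2 (div_pos hxn hun)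
  have ht2 : t * t = ‖x‖ / ‖u‖ := Real.mul_self_sqrt (le_of_lt (div_pos hxn hun))
  set a : EuclideanSpace ℝ (Fin p) := t • u with ha
  set b : EuclideanSpace ℝ (Fin p) := (1 / t) • x with hb
  have hna : ‖a‖ = t * ‖u‖ := by
    rw [ha, norm_smul, Real.norm_eq_abs, abs_of_pos htpos]
  have hnb : ‖b‖ = (1 / t) * ‖x‖ := by
    rw [hb, norm_smul, Real.norm_eq_abs, abs_of_pos (by positivity)]
  have hx' : t * t * ‖u‖ = ‖x‖ := by rw [ht2]; field_simp
  have hnab : ‖a‖ = ‖b‖ := by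
    rw [hna, hnb, ← hx']; field_simp
  have hprod : ‖a‖ * ‖a‖ = ‖u‖ * ‖x‖ := by
    rw [hna, ← hx']; ring
  -- quadratic bounds
  have hsupp : suppF (t • u) ∪ suppF ((1/t) • x) ⊆ D :=
    Finset.union_subset ((suppF_smul_subset t u).trans hu) ((suppF_smul_subset (1/t) x).trans hx)
  have hQsum := hQ (a + b) ((suppF_add_subset a b).trans hsupp)
  have hQdiff := hQ (a - b) ((suppF_sub_subset a b).trans hsupp)
  -- expand bilinear
  have hBsum : B2 (a + b) (a + b) = B2 a a + 2 * B2 a b + B2 b b := by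
    simp only [map_add, ContinuousLinearMap.add_apply]
    rw [hsymm b a]; ring
  have hBdiff : B2 (a - b) (a - b) = B2 a a - 2 * B2 a b + B2 b b := by
    simp only [map_sub, ContinuousLinearMap.sub_apply]
    rw [hsymm b a]; ring
  have hNsum : ‖a + b‖ ^ 2 = ‖a‖ ^ 2 + 2 * ⟪a, b⟫ + ‖b‖ ^ 2 := norm_add_sq_real a b
  have hNdiff : ‖a - b‖ ^ 2 = ‖a‖ ^ 2 - 2 * ⟪a, b⟫ + ‖b‖ ^ 2 := norm_sub_sq_real a b
  have key1 : ∀ v : EuclideanSpace ℝ (Fin p), α * ‖v‖ ^ 2 ≤ B2 v v →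
      ‖v‖ ^ 2 - (1 / L) * B2 v v ≤ (1 - α / L) * ‖v‖ ^ 2 := by
    intro v hv
    have h := mul_le_mul_of_nonneg_left hv (le_of_lt (one_div_pos.2 hL))
    have he : (1 - α / L) * ‖v‖ ^ 2 = ‖v‖ ^ 2 - (1 / L) * (α * ‖v‖ ^ 2) := by
      field_simp
    linarith
  have key2 : ∀ v : EuclideanSpace ℝ (Fin p), B2 v v ≤ L * ‖v‖ ^ 2 →
      0 ≤ ‖v‖ ^ 2 - (1 / L) * B2 v v := by
    intro v hv
    have h := mul_le_mul_of_nonneg_left hv (le_of_lt (one_div_pos.2 hL))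
    have he : (1 / L) * (L * ‖v‖ ^ 2) = ‖v‖ ^ 2 := by field_simp
    linarith
  have h1 := key1 (a + b) hQsum.1
  have h2 := key2 (a - b) hQdiff.2
  -- relate T(u,x) to a,b
  have hinner_scale : ⟪a, b⟫ = ⟪u, x⟫ := by
    rw [ha, hb, real_inner_smul_left, real_inner_smul_right, ← mul_assoc,
      mul_one_div_cancel htpos.ne', one_mul]
  have hB_scale : B2 a b = B2 x u := by
    rw [ha, hb]
    simp only [map_smul, ContinuousLinearMap.smul_apply, smul_eq_mul]
    rw [hsymm u x]; field_simp
  have hTdiff : (‖a + b‖ ^ 2 - (1 / L) * B2 (a + b) (a + b))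
      - (‖a - b‖ ^ 2 - (1 / L) * B2 (a - b) (a - b))
      = 4 * (⟪u, x⟫ - (1 / L) * B2 x u) := by
    rw [hBsum, hBdiff, hNsum, hNdiff, hinner_scale, hB_scale]; ring
  have hub : ‖a + b‖ ^ 2 ≤ 4 * (‖u‖ * ‖x‖) := by
    have h3 : ‖a + b‖ ≤ ‖a‖ + ‖b‖ := norm_add_le a b
    nlinarith [norm_nonneg (a + b), norm_nonneg a, hnab, hprod]
  have hfin : (1 - α / L) * ‖a + b‖ ^ 2 ≤ (1 - α / L) * (4 * (‖u‖ * ‖x‖)) :=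
    mul_le_mul_of_nonneg_left hub hc
  linarith

set_option maxHeartbeats 1000000 in
/-- Core contraction estimate via the fundamental theorem of calculus. -/
lemma core_contract (f : EuclideanSpace ℝ (Fin p) → ℝ) (hf : ContDiff ℝ 2 f)
    (α L : ℝ) (hα : 0 < α) (hαL : α ≤ L)
    (D : Finset (Fin p)) (a b : EuclideanSpace ℝ (Fin p))
    (hab : suppF (a - b) ⊆ D)
    (hQ : ∀ s : ℝ, ∀ v : EuclideanSpace ℝ (Fin p), suppF v ⊆ D →
      α * ‖v‖ ^ 2 ≤ fderiv ℝ (fderiv ℝ f) (b + s • (a - b)) v v ∧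
      fderiv ℝ (fderiv ℝ f) (b + s • (a - b)) v v ≤ L * ‖v‖ ^ 2) :
    ‖restrict (a - b - (1 / L) • (gradient f a - gradient f b)) D‖ ≤ (1 - α / L) * ‖a - b‖ := by
  have hL : 0 < L := lt_of_lt_of_le hα hαL
  have hc : 0 ≤ 1 - α / L := by
    have : α / L ≤ 1 := (div_le_one hL).2 hαL
    linarith
  set x : EuclideanSpace ℝ (Fin p) := a - b with hxdef
  set y : EuclideanSpace ℝ (Fin p) := x - (1 / L) • (gradient f a - gradient f b) with hydef
  set u : EuclideanSpace ℝ (Fin p) := restrict y D with hudef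
  have husupp : suppF u ⊆ D := suppF_restrict y D
  -- differentiability facts
  have hF1 : ContDiff ℝ 1 (fderiv ℝ f) := hf.fderiv_right (by norm_num)
  have hFd : Differentiable ℝ (fderiv ℝ f) := hF1.differentiable one_ne_zero
  have hfd : Differentiable ℝ f := hf.differentiable (by norm_num)
  -- the curve
  set c : ℝ → EuclideanSpace ℝ (Fin p) := fun s => b + s • x with hcdef
  have hc0 : c 0 = b := by simp [hcdef]
  have hc1 : c 1 = a := by simp [hcdef, hxdef]
  have hcderiv : ∀ s : ℝ, HasDerivAt c x s := by
    intro s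
    simpa [hcdef] using ((hasDerivAt_id s).smul_const x).const_add b
  -- the scalar function g s = fderiv f (c s) u
  set g : ℝ → ℝ := fun s => fderiv ℝ f (c s) u with hgdef
  set g' : ℝ → ℝ := fun s => fderiv ℝ (fderiv ℝ f) (c s) x u with hg'def
  have hgderiv : ∀ s : ℝ, HasDerivAt g (g' s) s := by
    intro s
    have h1 : HasDerivAt (fun s => fderiv ℝ f (c s)) (fderiv ℝ (fderiv ℝ f) (c s) x) s :=
      (hFd (c s)).hasFDerivAt.comp_hasDerivAt s (hcderiv s)
    exact (ContinuousLinearMap.apply ℝ ℝ u).hasFDerivAt.comp_hasDerivAt s h1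
  have hg'cont : Continuous g' := by
    have h1 : Continuous (fderiv ℝ (fderiv ℝ f)) := hF1.continuous_fderiv one_ne_zero
    have h2 : Continuous c := by
      apply Continuous.add continuous_const
      exact (continuous_id.smul continuous_const)
    exact ((h1.comp h2).clm_apply continuous_const).clm_apply continuous_const
  have hg'int : IntervalIntegrable g' MeasureTheory.volume 0 1 :=
    hg'cont.intervalIntegrable 0 1
  have hFTC : ∫ s in (0:ℝ)..1, g' s = g 1 - g 0 :=
    intervalIntegral.integral_eq_sub_of_hasDerivAt (fun s _ => hgderiv s) hg'int
  -- inner products via gradient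
  have hgrad : ∀ w : EuclideanSpace ℝ (Fin p), ⟪u, gradient f w⟫ = fderiv ℝ f w u := by
    intro w
    rw [real_inner_comm]
    exact InnerProductSpace.toDual_symm_apply
  -- ‖u‖² = ⟪u, y⟫ = ⟪u,x⟫ - (1/L)(g 1 - g 0)
  have husq : ‖u‖ ^ 2 = ⟪u, x⟫ - (1 / L) * (g 1 - g 0) := by
    have h0 : ‖u‖ ^ 2 = ⟪u, y⟫ := (inner_restrict_self_eq y D).symm
    rw [h0, hydef]
    simp only [inner_sub_right, real_inner_smul_right, hgrad a, hgrad b]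
    rw [hgdef]
    simp [hc0, hc1]
  -- integral representation
  have hrep : ‖u‖ ^ 2 = ∫ s in (0:ℝ)..1, (⟪u, x⟫ - (1 / L) * g' s) := by
    rw [intervalIntegral.integral_sub intervalIntegrable_const (hg'int.const_mul _),
      intervalIntegral.integral_const, intervalIntegral.integral_const_mul, hFTC, husq]
    simp
  -- pointwise bound
  have hpt : ∀ s ∈ Set.Icc (0:ℝ) 1, ⟪u, x⟫ - (1 / L) * g' s ≤ (1 - α / L) * (‖u‖ * ‖x‖) := by
    intro s _
    have hsymm : ∀ v w : EuclideanSpace ℝ (Fin p),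
        fderiv ℝ (fderiv ℝ f) (c s) v w = fderiv ℝ (fderiv ℝ f) (c s) w v := by
      intro v w
      exact second_derivative_symmetric (fun z => (hfd z).hasFDerivAt)
        ((hFd (c s)).hasFDerivAt) v w
    exact polar_bound α L hα hαL (fderiv ℝ (fderiv ℝ f) (c s)) hsymm D
      (hQ s) u x husupp hab
  -- integrate the bound
  have hint : ‖u‖ ^ 2 ≤ (1 - α / L) * (‖u‖ * ‖x‖) := by
    rw [hrep]
    calc ∫ s in (0:ℝ)..1, (⟪u, x⟫ - (1 / L) * g' s)
        ≤ ∫ _ in (0:ℝ)..1, (1 - α / L) * (‖u‖ * ‖x‖) := by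
          apply intervalIntegral.integral_mono_on (by norm_num)
            (intervalIntegrable_const.sub (hg'int.const_mul _)) intervalIntegrable_const hpt
      _ = (1 - α / L) * (‖u‖ * ‖x‖) := by simp
  -- conclude
  by_cases hu0 : ‖u‖ = 0
  · rw [hu0]; positivity
  · have hupos : 0 < ‖u‖ := lt_of_le_of_ne (norm_nonneg u) (Ne.symm hu0)
    have : ‖u‖ * ‖u‖ ≤ ((1 - α / L) * ‖x‖) * ‖u‖ := by nlinarith [hint]
    exact le_of_mul_le_mul_right this hupos

end Core
end Toolbox

set_option maxHeartbeats 1600000 in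
/-- Theorem `approx_gen` of the paper, abstract form: IHT over an abstract
family of supports `𝒮_k` with a `(θ, ε)`-approximate projection property and restricted
Hessian bounds, with `ρ = (1 + √θ)(1 − α/L) < 1`, contracts geometrically:
`‖w_T − w*‖ ≤ ρ^T‖w_0 − w*‖ + (1/(1−ρ))[((1+√θ)/L)γ + √ε]`,
where `γ = sup_{S ∈ 𝒮_k} ‖(∇f(w*))_{S∪S*}‖`. -/
theorem stmt_12 (p : ℕ) (𝒮 : Set (Finset (Fin p)))
    (wstar : EuclideanSpace ℝ (Fin p))
    (α L : ℝ) (hα : 0 < α) (hαL : α ≤ L)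
    (f : EuclideanSpace ℝ (Fin p) → ℝ) (hf : ContDiff ℝ 2 f)
    (hH : ∀ S ∈ 𝒮, ∀ S' ∈ 𝒮, ∀ w : EuclideanSpace ℝ (Fin p),
        suppF w ⊆ S ∪ suppF wstar →
        ∀ v : EuclideanSpace ℝ (Fin p), suppF v ⊆ S ∪ S' ∪ suppF wstar →
        α * ‖v‖ ^ 2 ≤ iteratedFDeriv ℝ 2 f w ![v, v] ∧
        iteratedFDeriv ℝ 2 f w ![v, v] ≤ L * ‖v‖ ^ 2)
    (θ ε : ℝ) (hθ : 0 ≤ θ) (hε : 0 ≤ ε)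
    (ρ : ℝ) (hρdef : ρ = (1 + Real.sqrt θ) * (1 - α / L)) (hρ : ρ < 1)
    (w : ℕ → EuclideanSpace ℝ (Fin p)) (S : ℕ → Finset (Fin p))
    (hS0 : S 0 ∈ 𝒮) (hw0 : suppF (w 0) ⊆ S 0)
    (hSmem : ∀ t : ℕ, S (t + 1) ∈ 𝒮)
    (hstep : ∀ t : ℕ, w (t + 1) = restrict (w t - (1 / L) • gradient f (w t)) (S (t + 1)))
    (happrox : ∀ t : ℕ,
        ‖restrict (w t - (1 / L) • gradient f (w t)) (suppF wstar \ S (t + 1))‖ ^ 2 ≤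
          θ * ‖restrict (w t - (1 / L) • gradient f (w t)) (S (t + 1) \ suppF wstar)‖ ^ 2 + ε)
    (γ : ℝ)
    (hγ : γ = sSup {r : ℝ | ∃ Sm ∈ 𝒮,
        r = ‖restrict (gradient f wstar) (Sm ∪ suppF wstar)‖}) :
    ∀ T : ℕ, ‖w T - wstar‖ ≤
      ρ ^ T * ‖w 0 - wstar‖ +
        (1 / (1 - ρ)) * ((1 + Real.sqrt θ) / L * γ + Real.sqrt ε) := by
  classical
  have hL : 0 < L := lt_of_lt_of_le hα hαL
  have hc0 : 0 ≤ 1 - α / L := by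
    have : α / L ≤ 1 := (div_le_one hL).2 hαL
    linarith
  have hsq : 0 ≤ Real.sqrt θ := Real.sqrt_nonneg θ
  have hρ0 : 0 ≤ ρ := by
    rw [hρdef]; exact mul_nonneg (by positivity) hc0
  set Sst : Finset (Fin p) := suppF wstar with hSstdef
  have hSall : ∀ t, S t ∈ 𝒮 := by
    intro t; cases t with
    | zero => exact hS0
    | succ t => exact hSmem t
  have hws : ∀ t, suppF (w t) ⊆ S t := by
    intro t; cases t with
    | zero => exact hw0
    | succ t => rw [hstep t]; exact suppF_restrict _ _
  have hmemΓ : ∀ Sm ∈ 𝒮, ‖restrict (gradient f wstar) (Sm ∪ Sst)‖ ≤ γ := by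
    intro Sm hSm
    rw [hγ]
    apply le_csSup
    · refine ⟨‖gradient f wstar‖, ?_⟩
      rintro r ⟨Sm', hSm', rfl⟩
      exact norm_restrict_le _ _
    · exact ⟨Sm, hSm, rfl⟩
  have hγ0 : 0 ≤ γ := le_trans (norm_nonneg _) (hmemΓ (S 0) (hSall 0))
  set K : ℝ := (1 + Real.sqrt θ) / L * γ + Real.sqrt ε with hK
  have hK0 : 0 ≤ K :=
    add_nonneg (mul_nonneg (by positivity) hγ0) (Real.sqrt_nonneg ε)
  -- the one-step contraction bound
  have hstepbd : ∀ t, ‖w (t + 1) - wstar‖ ≤ ρ * ‖w t - wstar‖ + K := by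
    intro t
    set bb : EuclideanSpace ℝ (Fin p) := w t - (1 / L) • gradient f (w t) with hbb
    set T : Finset (Fin p) := S (t + 1) with hT
    set x : EuclideanSpace ℝ (Fin p) := w t - wstar with hx
    set D : Finset (Fin p) := S t ∪ S (t + 1) ∪ Sst with hD
    have hxsupp : suppF x ⊆ D := by
      refine (suppF_sub_subset _ _).trans (Finset.union_subset ?_ ?_)
      · exact (hws t).trans (Finset.subset_union_left.trans Finset.subset_union_left)
      · exact Finset.subset_union_right
    have hwz : ∀ i, i ∉ Sst → wstar i = 0 :=
      fun i hi => suppF_subset_iff.1 (le_refl _) i hi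
    -- decomposition of the iterate
    have hdec : w (t + 1) - wstar = restrict (bb - wstar) T - restrict wstar (Sst \ T) := by
      ext i
      have h1 : (w (t + 1)) i = if i ∈ T then bb i else 0 := by rw [hstep t]; rfl
      show (w (t + 1)) i - wstar i =
        restrict (bb - wstar) T i - restrict wstar (Sst \ T) i
      rw [h1, restrict_apply, restrict_apply]
      by_cases hiT : i ∈ T
      · have : i ∉ Sst \ T := fun hc => (Finset.mem_sdiff.1 hc).2 hiT
        simp [hiT, this]
      · by_cases hiS : i ∈ Sst
        · have : i ∈ Sst \ T := Finset.mem_sdiff.2 ⟨hiS, hiT⟩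
          simp [hiT, this]
        · have : i ∉ Sst \ T := fun hc => hiS (Finset.mem_sdiff.1 hc).1
          simp [hiT, this, hwz i hiS]
    have hdisj : Disjoint T (Sst \ T) := Finset.disjoint_sdiff
    have hpyth : ‖w (t + 1) - wstar‖ ^ 2 =
        ‖restrict (bb - wstar) T‖ ^ 2 + ‖restrict wstar (Sst \ T)‖ ^ 2 := by
      rw [hdec]
      exact norm_sub_sq_disj _ _ (hdisj.mono (suppF_restrict _ _) (suppF_restrict _ _))
    -- the approximate projection property
    have happ : ‖restrict bb (Sst \ T)‖ ^ 2 ≤ θ * ‖restrict bb (T \ Sst)‖ ^ 2 + ε :=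
      happrox t
    have hBb : ‖restrict bb (Sst \ T)‖ ≤
        Real.sqrt θ * ‖restrict bb (T \ Sst)‖ + Real.sqrt ε :=
      sqrt_theta_bound hθ hε (norm_nonneg _) (norm_nonneg _) happ
    have hbw : restrict bb (T \ Sst) = restrict (bb - wstar) (T \ Sst) := by
      ext i
      rw [restrict_apply, restrict_apply]
      by_cases hi : i ∈ T \ Sst
      · rw [if_pos hi, if_pos hi]
        have h0 : wstar i = 0 := hwz i (Finset.mem_sdiff.1 hi).2
        show bb i = bb i - wstar i
        rw [h0, sub_zero]
      · simp [hi]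
    have hWb : ‖restrict wstar (Sst \ T)‖ ≤
        Real.sqrt θ * ‖restrict (bb - wstar) (T \ Sst)‖ +
          ‖restrict (bb - wstar) (Sst \ T)‖ + Real.sqrt ε := by
      have h1 : restrict wstar (Sst \ T) =
          restrict bb (Sst \ T) - restrict (bb - wstar) (Sst \ T) := by
        rw [← restrict_sub, sub_sub_cancel]
      rw [h1]
      have h2 := norm_sub_le (restrict bb (Sst \ T)) (restrict (bb - wstar) (Sst \ T))
      rw [hbw] at hBb
      linarith
    set P : ℝ := ‖restrict (bb - wstar) (T ∪ Sst)‖ with hP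
    have hPnn : 0 ≤ P := norm_nonneg _
    have hAD : ‖restrict (bb - wstar) T‖ ^ 2 + ‖restrict (bb - wstar) (Sst \ T)‖ ^ 2
        = P ^ 2 := by
      rw [hP, ← Finset.union_sdiff_self_eq_union, norm_sq_restrict_union hdisj]
    have hC : ‖restrict (bb - wstar) (T \ Sst)‖ ≤ P :=
      norm_restrict_mono ((Finset.sdiff_subset).trans Finset.subset_union_left) _
    have hDle : ‖restrict (bb - wstar) (Sst \ T)‖ ≤ P :=
      norm_restrict_mono ((Finset.sdiff_subset).trans Finset.subset_union_right) _
    have hsqbound : ‖w (t + 1) - wstar‖ ^ 2 ≤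
        ((1 + Real.sqrt θ) * P + Real.sqrt ε) ^ 2 := by
      have hW2 : ‖restrict wstar (Sst \ T)‖ ≤
          Real.sqrt θ * P + ‖restrict (bb - wstar) (Sst \ T)‖ + Real.sqrt ε := by
        have := mul_le_mul_of_nonneg_left hC hsq
        linarith
      rw [hpyth]
      have hprodn : 0 ≤ 2 * ((Real.sqrt θ * P + Real.sqrt ε) *
          (P - ‖restrict (bb - wstar) (Sst \ T)‖)) := by
        refine mul_nonneg (by norm_num) (mul_nonneg ?_ (sub_nonneg.2 hDle))
        positivity
      have hWsq : ‖restrict wstar (Sst \ T)‖ ^ 2 ≤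
          (Real.sqrt θ * P + ‖restrict (bb - wstar) (Sst \ T)‖ + Real.sqrt ε) ^ 2 :=
        pow_le_pow_left₀ (norm_nonneg _) hW2 2
      have halg : (Real.sqrt θ * P + ‖restrict (bb - wstar) (Sst \ T)‖ + Real.sqrt ε) ^ 2
          = ((1 + Real.sqrt θ) * P + Real.sqrt ε) ^ 2
            - (P ^ 2 - ‖restrict (bb - wstar) (Sst \ T)‖ ^ 2)
            - 2 * ((Real.sqrt θ * P + Real.sqrt ε) *
              (P - ‖restrict (bb - wstar) (Sst \ T)‖)) := by ring
      linarith [hAD, hWsq, halg, hprodn]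
    have hnormbd : ‖w (t + 1) - wstar‖ ≤ (1 + Real.sqrt θ) * P + Real.sqrt ε :=
      le_of_sq_le_sq' (norm_nonneg _) (by positivity) hsqbound
    -- bound P using the core contraction estimate
    have hcore : ‖restrict (x - (1 / L) • (gradient f (w t) - gradient f wstar)) D‖ ≤
        (1 - α / L) * ‖x‖ := by
      apply core_contract f hf α L hα hαL D (w t) wstar hxsupp
      intro s v hv
      have hzsupp : suppF (wstar + s • (w t - wstar)) ⊆ S t ∪ Sst := by
        refine (suppF_add_subset _ _).trans (Finset.union_subset ?_ ?_)
        · exact Finset.subset_union_right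
        · exact (suppF_smul_subset _ _).trans ((suppF_sub_subset _ _).trans
            (Finset.union_subset ((hws t).trans Finset.subset_union_left)
              Finset.subset_union_right))
      have hHv := hH (S t) (hSall t) (S (t + 1)) (hSmem t)
        (wstar + s • (w t - wstar)) hzsupp v hv
      have hiter : iteratedFDeriv ℝ 2 f (wstar + s • (w t - wstar)) ![v, v] =
          fderiv ℝ (fderiv ℝ f) (wstar + s • (w t - wstar)) v v := by
        rw [iteratedFDeriv_two_apply]
        simp
      rw [hiter] at hHv
      exact hHv
    have hsplit : restrict (bb - wstar) (T ∪ Sst) =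
        restrict (x - (1 / L) • (gradient f (w t) - gradient f wstar)) (T ∪ Sst)
          - (1 / L) • restrict (gradient f wstar) (T ∪ Sst) := by
      rw [← restrict_smul, ← restrict_sub]
      congr 1
      rw [hbb, hx]
      simp only [smul_sub]
      abel
    have hPb : P ≤ (1 - α / L) * ‖x‖ + (1 / L) * γ := by
      rw [hP, hsplit]
      have h1 := norm_sub_le
        (restrict (x - (1 / L) • (gradient f (w t) - gradient f wstar)) (T ∪ Sst))
        ((1 / L) • restrict (gradient f wstar) (T ∪ Sst))
      have h2 : ‖restrict (x - (1 / L) • (gradient f (w t) - gradient f wstar)) (T ∪ Sst)‖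
          ≤ (1 - α / L) * ‖x‖ := by
        refine le_trans (norm_restrict_mono ?_ _) hcore
        exact Finset.union_subset
          (Finset.subset_union_right.trans Finset.subset_union_left)
          Finset.subset_union_right
      have h3 : ‖(1 / L) • restrict (gradient f wstar) (T ∪ Sst)‖ ≤ (1 / L) * γ := by
        rw [norm_smul, Real.norm_eq_abs, abs_of_pos (by positivity : (0:ℝ) < 1 / L)]
        exact mul_le_mul_of_nonneg_left (hmemΓ (S (t + 1)) (hSmem t)) (by positivity)
      linarith
    -- combine
    have hcomb : ‖w (t + 1) - wstar‖ ≤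
        (1 + Real.sqrt θ) * ((1 - α / L) * ‖x‖ + (1 / L) * γ) + Real.sqrt ε := by
      have := mul_le_mul_of_nonneg_left hPb (by positivity : (0:ℝ) ≤ 1 + Real.sqrt θ)
      linarith
    have heq : (1 + Real.sqrt θ) * ((1 - α / L) * ‖x‖ + (1 / L) * γ) + Real.sqrt ε
        = ρ * ‖x‖ + K := by
      rw [hρdef, hK]; ring
    rw [heq] at hcomb
    exact hcomb
  -- geometric-series induction
  intro T
  have h1ρ : 0 < 1 - ρ := by linarith
  induction T with
  | zero =>
    have : 0 ≤ 1 / (1 - ρ) * K := mul_nonneg (by positivity) hK0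
    simp only [pow_zero, one_mul]
    linarith
  | succ T ih =>
    have h1 := hstepbd T
    have h2 : ρ * ‖w T - wstar‖ ≤
        ρ * (ρ ^ T * ‖w 0 - wstar‖ + 1 / (1 - ρ) * K) :=
      mul_le_mul_of_nonneg_left ih hρ0
    have heq : ρ * (ρ ^ T * ‖w 0 - wstar‖ + 1 / (1 - ρ) * K) + K =
        ρ ^ (T + 1) * ‖w 0 - wstar‖ + 1 / (1 - ρ) * K := by
      have hne : (1 : ℝ) - ρ ≠ 0 := ne_of_gt h1ρ
      field_simp
      ring
    calc ‖w (T + 1) - wstar‖ ≤ ρ * ‖w T - wstar‖ + K := h1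
      _ ≤ ρ * (ρ ^ T * ‖w 0 - wstar‖ + 1 / (1 - ρ) * K) + K := by linarith
      _ = ρ ^ (T + 1) * ‖w 0 - wstar‖ + 1 / (1 - ρ) * K := heq
end
end

section
/- Let z ∈ ℝ^p, let S ⊆ {1, …, p} with |S| = k be such that |z_a| ≥ |z_b| for every a ∈ S and b ∉ S (S consists of k largest-magnitude coordinates of z), and let S* ⊆ {1, …, p} with |S*| ≤ k* ≤ k. Then ‖z_{S*\S}‖² ≤ (k*/k) · ‖z_{S\S*}‖². -/
open Finset

noncomputable section

/-- Lemma 1 of Jain et al., hard thresholding: if `S` consists of `k`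
largest-magnitude coordinates of `z` and `|S*| ≤ k* ≤ k`, then
`‖z_{S*\S}‖² ≤ (k*/k)‖z_{S\S*}‖²`. -/
theorem stmt_13 (p : ℕ) (z : EuclideanSpace ℝ (Fin p))
    (k kstar : ℕ) (hks : kstar ≤ k)
    (S : Finset (Fin p)) (hScard : S.card = k)
    (hStop : ∀ a ∈ S, ∀ b ∉ S, |z b| ≤ |z a|)
    (Sstar : Finset (Fin p)) (hSstar : Sstar.card ≤ kstar) :
    ‖restrict z (Sstar \ S)‖ ^ 2 ≤ ((kstar : ℝ) / (k : ℝ)) * ‖restrict z (S \ Sstar)‖ ^ 2 := by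

  classical
  have hnorm : ∀ T : Finset (Fin p), ‖restrict z T‖ ^ 2 = ∑ i ∈ T, (z i) ^ 2 := by
    intro T
    rw [EuclideanSpace.norm_eq, Real.sq_sqrt (by positivity)]
    have : ∀ i : Fin p, ‖restrict z T i‖ ^ 2 = if i ∈ T then (z i) ^ 2 else 0 := by
      intro i; by_cases h : i ∈ T <;> simp [_root_.restrict, h]
    rw [Finset.sum_congr rfl fun i _ => this i, Finset.sum_ite_mem, Finset.univ_inter]
  rw [hnorm, hnorm]
  set A := Sstar \ S with hA
  set B := S \ Sstar with hB
  have hAn : (0:ℝ) ≤ ∑ i ∈ A, (z i) ^ 2 := Finset.sum_nonneg fun i _ => sq_nonneg _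
  have hBn : (0:ℝ) ≤ ∑ i ∈ B, (z i) ^ 2 := Finset.sum_nonneg fun i _ => sq_nonneg _
  have key : (B.card : ℝ) * ∑ i ∈ A, (z i) ^ 2 ≤ (A.card : ℝ) * ∑ i ∈ B, (z i) ^ 2 := by
    have h1 : ∑ b ∈ A, ∑ a ∈ B, (z b) ^ 2 ≤ ∑ b ∈ A, ∑ a ∈ B, (z a) ^ 2 := by
      refine Finset.sum_le_sum fun b hb => Finset.sum_le_sum fun a ha => ?_
      have hbS : b ∉ S := (Finset.mem_sdiff.mp hb).2
      have haS : a ∈ S := (Finset.mem_sdiff.mp ha).1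
      have := hStop a haS b hbS
      calc (z b) ^ 2 = |z b| ^ 2 := (sq_abs _).symm
        _ ≤ |z a| ^ 2 := pow_le_pow_left₀ (abs_nonneg _) this 2
        _ = (z a) ^ 2 := sq_abs _
    simpa [Finset.sum_const, nsmul_eq_mul, Finset.mul_sum, mul_comm] using h1
  have ht1 : A.card + (Sstar ∩ S).card = Sstar.card := Finset.card_sdiff_add_card_inter _ _
  have ht2 : B.card + (S ∩ Sstar).card = S.card := Finset.card_sdiff_add_card_inter _ _
  have hti : (Sstar ∩ S).card = (S ∩ Sstar).card := by rw [Finset.inter_comm]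
  have hab : A.card ≤ B.card := by omega
  have hcard : A.card * k ≤ kstar * B.card := by
    have h1 : A.card + (S ∩ Sstar).card ≤ kstar := by omega
    have h2 : B.card + (S ∩ Sstar).card = k := by omega
    nlinarith [Nat.mul_le_mul_right B.card h1, Nat.mul_le_mul_left A.card hab]
  rcases Nat.eq_zero_or_pos k with hk | hk
  · have hA0 : A.card = 0 := by omega
    have : A = ∅ := Finset.card_eq_zero.mp hA0
    simp only [this, Finset.sum_empty]
    positivity
  · rw [div_mul_eq_mul_div, le_div_iff₀ (by exact_mod_cast hk : (0:ℝ) < (k:ℝ))]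
    rcases Nat.eq_zero_or_pos B.card with hb | hb
    · have hA0 : A.card = 0 := by omega
      have : A = ∅ := Finset.card_eq_zero.mp hA0
      simp only [this, Finset.sum_empty, zero_mul]
      positivity
    · have hcard' : (A.card : ℝ) * k ≤ (kstar : ℝ) * B.card := by exact_mod_cast hcard
      have hb' : (0:ℝ) < B.card := by exact_mod_cast hb
      have hk' : (0:ℝ) ≤ (k:ℝ) := by positivity
      nlinarith [mul_le_mul_of_nonneg_left key hk', mul_le_mul_of_nonneg_right hcard' hBn]
end
end
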